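/- arXiv:2210.14751 — 2 statements merged into one kernel-verified Lean document; each statement's English description precedes it below -/
import Mathlib

section
/- Let R = Γ^T Γ be the Cholesky factorization of a K×K positive definite correlation matrix, with Γ = (γ_{k₁,k₂}) upper triangular. Then the determinant of the matrix obtained by replacing the (K, K−1) entry (and its symmetric counterpart) of R by t is positive if and only if t lies in the open interval (g − h, g + h), where g = Σ_{k=1}^{K−2} γ_{k,K−1} γ_{k,K} and h = γ_{K−1,K−1} · sqrt(1 − Σ_{k=1}^{K−2} γ_{k,K}²). -/
open Matrix Finset

lemma aux_sum_split {n : ℕ} (f : Fin (n+2) → ℝ) (a b : Fin (n+2))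
    (ha : (a:ℕ) = n) (hb : (b:ℕ) = n+1) :
    ∑ k, f k = (∑ k : Fin n, f (k.castLE (Nat.le_add_right n 2))) + f a + f b := by
  have h1 : a = (Fin.last n).castSucc := Fin.ext (by simp [ha])
  have h2 : b = Fin.last (n+1) := Fin.ext (by simp [hb])
  subst h1; subst h2
  rw [Fin.sum_univ_castSucc, Fin.sum_univ_castSucc]
  rfl

lemma aux_det_add_last {m : ℕ} (A : Matrix (Fin (m+1)) (Fin (m+1)) ℝ) (c : ℝ) :
    (A + c • Matrix.single (Fin.last m) (Fin.last m) 1).det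
      = A.det + c * (A.submatrix Fin.castSucc Fin.castSucc).det := by
  have h1 : A + c • Matrix.single (Fin.last m) (Fin.last m) 1
      = A.updateRow (Fin.last m) (A (Fin.last m) + c • (Pi.single (Fin.last m) 1 : Fin (m+1) → ℝ)) := by
    ext i j
    rw [Matrix.add_apply, Matrix.smul_apply, smul_eq_mul]
    by_cases hi : i = Fin.last m
    · subst hi
      rw [Matrix.updateRow_self]
      by_cases hj : j = Fin.last m
      · subst hj; simp [Matrix.single]
      · simp [Matrix.single, Pi.single_eq_of_ne hj, Ne.symm hj]
    · rw [Matrix.updateRow_ne hi]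
      simp [Matrix.single, Ne.symm hi]
  rw [h1, Matrix.det_updateRow_add, Matrix.updateRow_eq_self, Matrix.det_updateRow_smul]
  congr 1
  have hsub : (A.updateRow (Fin.last m) (Pi.single (Fin.last m) 1)).submatrix
      (Fin.last m).succAbove (Fin.last m).succAbove = A.submatrix Fin.castSucc Fin.castSucc := by
    rw [Fin.succAbove_last]
    ext i j
    simp [Matrix.updateRow_ne (Fin.castSucc_lt_last i).ne]
  congr 1
  rw [Matrix.det_succ_row _ (Fin.last m), Finset.sum_eq_single (Fin.last m)]
  · rw [hsub, Matrix.updateRow_self, Pi.single_eq_same]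
    have he : Even ((Fin.last m : ℕ) + (Fin.last m : ℕ)) := ⟨m, rfl⟩
    rw [he.neg_one_pow]
    ring
  · intro j _ hj
    rw [Matrix.updateRow_self, Pi.single_eq_of_ne hj]
    ring
  · simp

lemma aux_div (γ s x : ℝ) (hγ : 0 < γ) : (0 < s - (x/γ)^2) ↔ (0 < γ^2*s - x^2) := by
  rw [div_pow, sub_pos, sub_pos, div_lt_iff₀ (pow_pos hγ 2)]
  constructor <;> intro h <;> nlinarith

lemma aux_interval (γ s g t : ℝ) (hγ : 0 < γ) :
    (0 < γ^2 * s - (t - g)^2) ↔ (g - γ * Real.sqrt s < t ∧ t < g + γ * Real.sqrt s) := by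
  rcases le_or_gt 0 s with hs | hs
  · have h1 : (γ * Real.sqrt s)^2 = γ^2 * s := by
      rw [mul_pow, Real.sq_sqrt hs]
    have h2 : 0 ≤ γ * Real.sqrt s := by positivity
    constructor
    · intro h
      constructor <;> nlinarith [Real.sqrt_nonneg s]
    · rintro ⟨h3, h4⟩; nlinarith
  · have h0 : Real.sqrt s = 0 := Real.sqrt_eq_zero_of_nonpos hs.le
    constructor
    · intro h; nlinarith
    · rintro ⟨h3, h4⟩; rw [h0] at h3 h4; nlinarith

/-- Feasible interval for the `(K, K-1)` entry of a positive definite correlation matrix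
`R = Γᵀ Γ`, computed from its Cholesky factor `Γ`: the matrix obtained by replacing the
`(K, K-1)` entry (and its symmetric counterpart) by `t` has positive determinant iff
`t ∈ (g - h, g + h)` with `g = Σ_{k≤K-2} γ_{k,K-1} γ_{k,K}` and
`h = γ_{K-1,K-1}·sqrt(1 - Σ_{k≤K-2} γ_{k,K}²)`. -/
theorem cholesky_feasible_interval (n : ℕ)
    (R Γ : Matrix (Fin (n + 2)) (Fin (n + 2)) ℝ)
    (hfac : R = Γ.transpose * Γ)
    (hupper : ∀ i j : Fin (n + 2), j < i → Γ i j = 0)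
    (hdiagΓ : ∀ i, 0 < Γ i i)
    (hunit : ∀ i, R i i = 1)
    (hpd : R.PosDef) (t : ℝ) :
    0 < (Matrix.det (fun i j =>
          if (i = (⟨n + 1, by omega⟩ : Fin (n + 2)) ∧ j = (⟨n, by omega⟩ : Fin (n + 2)))
              ∨ (i = (⟨n, by omega⟩ : Fin (n + 2)) ∧ j = (⟨n + 1, by omega⟩ : Fin (n + 2)))
          then t else R i j)) ↔
      t ∈ Set.Ioo
        ((∑ k : Fin n, Γ (k.castLE (by omega)) ⟨n, by omega⟩ *
            Γ (k.castLE (by omega)) ⟨n + 1, by omega⟩) -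
          Γ ⟨n, by omega⟩ ⟨n, by omega⟩ *
            Real.sqrt (1 - ∑ k : Fin n, (Γ (k.castLE (by omega)) ⟨n + 1, by omega⟩) ^ 2))
        ((∑ k : Fin n, Γ (k.castLE (by omega)) ⟨n, by omega⟩ *
            Γ (k.castLE (by omega)) ⟨n + 1, by omega⟩) +
          Γ ⟨n, by omega⟩ ⟨n, by omega⟩ *
            Real.sqrt (1 - ∑ k : Fin n, (Γ (k.castLE (by omega)) ⟨n + 1, by omega⟩) ^ 2)) := by
  set a : Fin (n + 2) := ⟨n, by omega⟩ with ha
  set b : Fin (n + 2) := ⟨n + 1, by omega⟩ with hb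
  set g : ℝ := ∑ k : Fin n, Γ (k.castLE (by omega)) a * Γ (k.castLE (by omega)) b with hg
  set s : ℝ := 1 - ∑ k : Fin n, (Γ (k.castLE (by omega)) b) ^ 2 with hs
  have hva : (a : ℕ) = n := rfl
  have hvb : (b : ℕ) = n + 1 := rfl
  have hγ : 0 < Γ a a := hdiagΓ a
  have hγne : Γ a a ≠ 0 := ne_of_gt hγ
  set u : ℝ := (t - g) / Γ a a with hu
  have hab : a ≠ b := fun h => by have := congrArg Fin.val h; rw [hva, hvb] at this; omega
  have hba' : ¬ (b = a) := fun h => hab h.symm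
  have haltb : a < b := by rw [Fin.lt_def]; omega
  have hival : ∀ {i : Fin (n+2)}, i ≠ a → i ≠ b → (i:ℕ) < n := by
    intro i h1 h2
    have h1' : (i:ℕ) ≠ n := fun h => h1 (Fin.ext (by rw [hva]; exact h))
    have h2' : (i:ℕ) ≠ n+1 := fun h => h2 (Fin.ext (by rw [hvb]; exact h))
    have := i.isLt; omega
  have hlowa : ∀ {i : Fin (n+2)}, (i:ℕ) < n → Γ a i = 0 := by
    intro i h; exact hupper a i (by rw [Fin.lt_def]; omega)
  have hlowb : ∀ {i : Fin (n+2)}, (i:ℕ) < n → Γ b i = 0 := by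
    intro i h; exact hupper b i (by rw [Fin.lt_def]; omega)
  have hΓba : Γ b a = 0 := hupper b a haltb
  have hka : ∀ k : Fin n, (k.castLE (Nat.le_add_right n 2) : Fin (n+2)) ≠ a := by
    intro k h
    have := congrArg Fin.val h
    simp [hva] at this
    omega
  have hkb : ∀ k : Fin n, (k.castLE (Nat.le_add_right n 2) : Fin (n+2)) ≠ b := by
    intro k h
    have := congrArg Fin.val h
    simp [hvb] at this
    omega
  -- the modified Cholesky factor
  set Γ' : Matrix (Fin (n+2)) (Fin (n+2)) ℝ :=
    fun i j => if j = b then (if i = a then u else if i = b then 0 else Γ i j) else Γ i j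
    with hΓ'
  have hΓ'c : ∀ (r c : Fin (n+2)), c ≠ b → Γ' r c = Γ r c := by
    intro r c hc; simp [hΓ', hc]
  have hΓ'ab : Γ' a b = u := by simp [hΓ']
  have hΓ'bb : Γ' b b = 0 := by simp [hΓ', hba']
  have hΓ'ob : ∀ r : Fin (n+2), r ≠ a → r ≠ b → Γ' r b = Γ r b := by
    intro r h1 h2; simp [hΓ', h1, h2]
  have hΓ'k : ∀ (k : Fin n) (c : Fin (n+2)),
      Γ' (k.castLE (Nat.le_add_right n 2)) c = Γ (k.castLE (Nat.le_add_right n 2)) c := by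
    intro k c
    by_cases hc : c = b
    · subst hc; exact hΓ'ob _ (hka k) (hkb k)
    · exact hΓ'c _ _ hc
  have hRe : ∀ i j, R i j = ∑ k, Γ k i * Γ k j := by
    intro i j; rw [hfac]; simp [Matrix.mul_apply, Matrix.transpose_apply]
  -- key matrix identity
  have key : @Eq (Matrix (Fin (n+2)) (Fin (n+2)) ℝ)
      (fun i j => if (i = b ∧ j = a) ∨ (i = a ∧ j = b) then t else R i j)
      (Γ'.transpose * Γ' + (s - u^2) • Matrix.single b b 1) := by
    ext i j
    rw [Matrix.add_apply]
    rw [Matrix.smul_apply]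
    rw [Matrix.mul_apply]
    simp only [smul_eq_mul, Matrix.transpose_apply, Matrix.single, Matrix.of_apply,
      mul_ite, mul_one, mul_zero]
    rw [aux_sum_split (fun k => Γ' k i * Γ' k j) a b hva hvb]
    by_cases hjb : j = b
    · subst hjb
      by_cases hib : i = b
      · subst hib
        rw [if_neg (by rintro (⟨-,h⟩|⟨h,-⟩) <;> exact hba' h), if_pos ⟨rfl, rfl⟩, hunit b]
        have e1 : ∀ k ∈ (univ : Finset (Fin n)), Γ' (k.castLE (Nat.le_add_right n 2)) b *
            Γ' (k.castLE (Nat.le_add_right n 2)) b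
            = (Γ (k.castLE (Nat.le_add_right n 2)) b)^2 := by
          intro k _; rw [hΓ'k]; ring
        rw [Finset.sum_congr rfl e1, hΓ'ab, hΓ'bb, hs]
        ring
      · by_cases hia : i = a
        · subst hia
          rw [if_pos (Or.inr ⟨rfl, rfl⟩), if_neg (fun h => hba' h.1)]
          have e1 : ∀ k ∈ (univ : Finset (Fin n)), Γ' (k.castLE (Nat.le_add_right n 2)) a *
              Γ' (k.castLE (Nat.le_add_right n 2)) b
              = Γ (k.castLE (Nat.le_add_right n 2)) a * Γ (k.castLE (Nat.le_add_right n 2)) b := by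
            intro k _; rw [hΓ'k, hΓ'k]
          rw [Finset.sum_congr rfl e1, hΓ'ab, hΓ'bb, hΓ'c a a hab, hΓ'c b a hab,
            hu, mul_div_cancel₀ _ hγne, hΓba, ← hg]
          ring
        · have hin : (i:ℕ) < n := hival hia hib
          rw [if_neg (by rintro (⟨h,-⟩|⟨h,-⟩); exacts [hib h, hia h]),
            if_neg (fun h => hib h.1.symm)]
          have e1 : ∀ k ∈ (univ : Finset (Fin n)), Γ' (k.castLE (Nat.le_add_right n 2)) i *
              Γ' (k.castLE (Nat.le_add_right n 2)) b
              = Γ (k.castLE (Nat.le_add_right n 2)) i * Γ (k.castLE (Nat.le_add_right n 2)) b := by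
            intro k _; rw [hΓ'k, hΓ'k]
          rw [Finset.sum_congr rfl e1, hΓ'ab, hΓ'bb, hΓ'c a i hib, hΓ'c b i hib,
            hlowa hin, hRe i b, aux_sum_split (fun k => Γ k i * Γ k b) a b hva hvb,
            hlowa hin, hlowb hin]
          ring
    · by_cases hib : i = b
      · subst hib
        by_cases hja : j = a
        · subst hja
          rw [if_pos (Or.inl ⟨rfl, rfl⟩), if_neg (fun h => hba' h.2)]
          have e1 : ∀ k ∈ (univ : Finset (Fin n)), Γ' (k.castLE (Nat.le_add_right n 2)) b *
              Γ' (k.castLE (Nat.le_add_right n 2)) a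
              = Γ (k.castLE (Nat.le_add_right n 2)) b * Γ (k.castLE (Nat.le_add_right n 2)) a := by
            intro k _; rw [hΓ'k, hΓ'k]
          rw [Finset.sum_congr rfl e1, hΓ'ab, hΓ'bb, hΓ'c a a hab, hΓ'c b a hab,
            hu, hΓba]
          have e2 : (∑ k : Fin n, Γ (k.castLE (Nat.le_add_right n 2)) b *
              Γ (k.castLE (Nat.le_add_right n 2)) a) = g := by
            rw [hg]; exact Finset.sum_congr rfl fun k _ => mul_comm _ _
          rw [e2]
          field_simp
          ring
        · have hjn : (j:ℕ) < n := hival hja hjb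
          rw [if_neg (by rintro (⟨-,h⟩|⟨h,-⟩); exacts [hja h, hba' h]),
            if_neg (fun h => hjb h.2.symm)]
          have e1 : ∀ k ∈ (univ : Finset (Fin n)), Γ' (k.castLE (Nat.le_add_right n 2)) b *
              Γ' (k.castLE (Nat.le_add_right n 2)) j
              = Γ (k.castLE (Nat.le_add_right n 2)) b * Γ (k.castLE (Nat.le_add_right n 2)) j := by
            intro k _; rw [hΓ'k, hΓ'k]
          rw [Finset.sum_congr rfl e1, hΓ'ab, hΓ'bb, hΓ'c a j hjb, hΓ'c b j hjb,
            hlowa hjn, hRe b j, aux_sum_split (fun k => Γ k b * Γ k j) a b hva hvb,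
            hlowa hjn, hlowb hjn]
          ring
      · rw [if_neg (by rintro (⟨h,-⟩|⟨-,h⟩); exacts [hib h, hjb h]),
          if_neg (fun h => hib h.1.symm)]
        have e1 : ∀ k ∈ (univ : Finset (Fin n)), Γ' (k.castLE (Nat.le_add_right n 2)) i *
            Γ' (k.castLE (Nat.le_add_right n 2)) j
            = Γ (k.castLE (Nat.le_add_right n 2)) i * Γ (k.castLE (Nat.le_add_right n 2)) j := by
          intro k _; rw [hΓ'k, hΓ'k]
        rw [Finset.sum_congr rfl e1, hΓ'c a i hib, hΓ'c a j hjb, hΓ'c b i hib,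
          hΓ'c b j hjb, hRe i j, aux_sum_split (fun k => Γ k i * Γ k j) a b hva hvb]
        ring
  -- determinant computation
  set e : Fin (n+1) → Fin (n+2) := Fin.castLE (by omega) with he
  have hdet : (Γ'.transpose * Γ' + (s - u^2) • Matrix.single b b 1).det
      = (Γ'.transpose * Γ').det
        + (s - u^2) * ((Γ'.transpose * Γ').submatrix e e).det :=
    aux_det_add_last (m := n+1) (Γ'.transpose * Γ') (s - u^2)
  have hΓ'ut : Γ'.BlockTriangular id := by
    intro i j hij
    by_cases hjb2 : j = b
    · exfalso
      have h1 : (j:ℕ) < (i:ℕ) := hij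
      have h2 := i.isLt
      have h3 := congrArg Fin.val hjb2
      rw [hvb] at h3
      omega
    · rw [hΓ'c _ _ hjb2]; exact hupper i j hij
  have hdet0 : (Γ'.transpose * Γ').det = 0 := by
    rw [Matrix.det_mul, Matrix.det_transpose, Matrix.det_of_upperTriangular hΓ'ut,
      Finset.prod_eq_zero (f := fun i => Γ' i i) (Finset.mem_univ b) hΓ'bb]
    ring
  have heb : ∀ i : Fin (n+1), e i ≠ b := by
    intro i h
    have h1 : (e i : ℕ) = (i : ℕ) := rfl
    have h2 := congrArg Fin.val h
    rw [h1, hvb] at h2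
    have := i.isLt
    omega
  have hminor : (Γ'.transpose * Γ').submatrix e e
      = (Γ.submatrix e e).transpose * (Γ.submatrix e e) := by
    ext i j
    simp only [Matrix.submatrix_apply, Matrix.mul_apply, Matrix.transpose_apply]
    have hR2 : ∑ k : Fin (n+1), Γ (e k) (e i) * Γ (e k) (e j)
        = (∑ k : Fin n, Γ (k.castLE (Nat.le_add_right n 2)) (e i) *
            Γ (k.castLE (Nat.le_add_right n 2)) (e j)) + Γ a (e i) * Γ a (e j) := by
      rw [Fin.sum_univ_castSucc]
      rfl
    rw [aux_sum_split (fun k => Γ' k (e i) * Γ' k (e j)) a b hva hvb, hR2]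
    have h1 : Γ' b (e i) = 0 := by
      rw [hΓ'c _ _ (heb i)]
      exact hupper b (e i) (by rw [Fin.lt_def, hvb]; exact i.isLt)
    have e1 : ∀ k ∈ (univ : Finset (Fin n)), Γ' (k.castLE (Nat.le_add_right n 2)) (e i) *
        Γ' (k.castLE (Nat.le_add_right n 2)) (e j)
        = Γ (k.castLE (Nat.le_add_right n 2)) (e i) * Γ (k.castLE (Nat.le_add_right n 2)) (e j) := by
      intro k _; rw [hΓ'k, hΓ'k]
    rw [Finset.sum_congr rfl e1, hΓ'c a (e i) (heb i), hΓ'c a (e j) (heb j), h1]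
    ring
  have hButl : (Γ.submatrix e e).BlockTriangular id := by
    intro i j hij
    exact hupper (e i) (e j) hij
  have hP : (0:ℝ) < (Γ.submatrix e e).det := by
    rw [Matrix.det_of_upperTriangular hButl]
    exact Finset.prod_pos fun i _ => hdiagΓ (e i)
  have hdet2 : ((Γ.submatrix e e).transpose * (Γ.submatrix e e)).det
      = ((Γ.submatrix e e).det)^2 := by
    rw [Matrix.det_mul, Matrix.det_transpose]; ring
  rw [key, hdet, hdet0, hminor, hdet2, zero_add]
  have hP2 : 0 < ((Γ.submatrix e e).det)^2 := pow_pos hP 2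
  have hiff1 : 0 < (s - u^2) * ((Γ.submatrix e e).det)^2 ↔ 0 < s - u^2 :=
    ⟨fun h => pos_of_mul_pos_left h hP2.le, fun h => mul_pos h hP2⟩
  rw [hiff1]
  have hiff2 : (0 < s - u ^ 2) ↔ (0 < Γ a a ^ 2 * s - (t - g) ^ 2) := by
    rw [hu]; exact aux_div (Γ a a) s (t - g) hγ
  rw [hiff2, Set.mem_Ioo]
  exact aux_interval (Γ a a) s g t hγ
end

section
/- Let Z₁ < Z₂ be reals and X(Z) = (1, Z, Z²). Then X([Z₁, Z₂]) ⊆ Conv({X(Z₁), X(Z₂), X₃}), where X₃ = (1, (Z₁+Z₂)/2, Z₁Z₂) is the point obtained from the intersection of the tangent lines to the parabola f(Z)=Z² at Z₁ and Z₂. Hence any linear functional of (1, Z, Z²) that is bounded in value at the three points X(Z₁), X(Z₂), X₃ is equally bounded on the whole curve segment. -/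
/-- The segment of the moment curve `Z ↦ (1, Z, Z²)` over `[Z₁, Z₂]` is contained in the
convex hull of the three points `X(Z₁)`, `X(Z₂)` and `X₃ = (1, (Z₁+Z₂)/2, Z₁Z₂)`, the
latter coming from the intersection of the tangents to the parabola at `Z₁` and `Z₂`. -/
theorem moment_curve_subset_convexHull (Z₁ Z₂ : ℝ) (h : Z₁ < Z₂) :
    (fun Z => (![1, Z, Z ^ 2] : Fin 3 → ℝ)) '' Set.Icc Z₁ Z₂ ⊆
      convexHull ℝ
        {![1, Z₁, Z₁ ^ 2], ![1, Z₂, Z₂ ^ 2], ![1, (Z₁ + Z₂) / 2, Z₁ * Z₂]} := by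
  rintro p ⟨Z, hZ, rfl⟩
  obtain ⟨hZ1, hZ2⟩ := hZ
  have hd : (0:ℝ) < Z₂ - Z₁ := by linarith
  set u : ℝ := (Z₂ - Z) / (Z₂ - Z₁) with hu
  set v : ℝ := (Z - Z₁) / (Z₂ - Z₁) with hv
  have hu0 : 0 ≤ u := div_nonneg (by linarith) hd.le
  have hv0 : 0 ≤ v := div_nonneg (by linarith) hd.le
  have huv : u + v = 1 := by
    rw [hu, hv, ← add_div]
    exact (div_eq_one_iff_eq hd.ne').mpr (by ring)
  set w : Fin 3 → ℝ := ![u ^ 2, v ^ 2, 2 * u * v] with hw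
  set z : Fin 3 → (Fin 3 → ℝ) :=
    ![![1, Z₁, Z₁ ^ 2], ![1, Z₂, Z₂ ^ 2], ![1, (Z₁ + Z₂) / 2, Z₁ * Z₂]] with hz
  have hws : ∑ i, w i = 1 := by
    simp [hw, Fin.sum_univ_three]
    nlinarith [huv]
  have hkey :
      (Finset.univ : Finset (Fin 3)).centerMass w z = ![1, Z, Z ^ 2] := by
    rw [Finset.centerMass, hws]
    funext i
    have hZeq : Z = (Z₂ - Z) / (Z₂ - Z₁) * Z₁ + (Z - Z₁) / (Z₂ - Z₁) * Z₂ := by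
      field_simp
      ring
    fin_cases i <;>
      simp [hw, hz, Fin.sum_univ_three, hu, hv] <;>
      field_simp <;> ring
  show ![1, Z, Z ^ 2] ∈ _
  rw [← hkey]
  apply Finset.centerMass_mem_convexHull
  · intro i _
    fin_cases i <;> simp [hw] <;> positivity
  · rw [hws]; norm_num
  · intro i _
    fin_cases i <;> simp [hz]
end
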